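/- For two agents with identical additive valuations over goods h_1,…,h_m (m ≥ 4) where v(h_1) = 1.2, v(h_2) = v(h_3) = 1, and v(h_j) = ε for j ≥ 4 with ε > 0 and (m−3)·ε < 0.2, the only EFX allocations are ({h_1, h_4, …, h_m}, {h_2, h_3}) and ({h_2, h_3}, {h_1, h_4, …, h_m}). -/

import Mathlib

lemma sum_decomp_aux (m : ℕ) (hm : 4 ≤ m) (ε : ℝ) (v : Fin m → ℝ)
    (hv0 : v ⟨0, by linarith⟩ = 1.2) (hv1 : v ⟨1, by linarith⟩ = 1) (hv2 : v ⟨2, by linarith⟩ = 1)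
    (hvrest : ∀ j : Fin m, 3 ≤ (j : ℕ) → v j = ε)
    (X : Finset (Fin m)) :
    ∑ x ∈ X, v x =
      (if (⟨0, by linarith⟩ : Fin m) ∈ X then 1.2 else 0)
      + (if (⟨1, by linarith⟩ : Fin m) ∈ X then 1 else 0)
      + (if (⟨2, by linarith⟩ : Fin m) ∈ X then 1 else 0)
      + (X \ {⟨0, by linarith⟩, ⟨1, by linarith⟩, ⟨2, by linarith⟩}).card * ε := by
  classical
  have h01 : (⟨0, by omega⟩ : Fin m) ≠ ⟨1, by omega⟩ := by simp [Fin.ext_iff]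
  have h02 : (⟨0, by omega⟩ : Fin m) ≠ ⟨2, by omega⟩ := by simp [Fin.ext_iff]
  have h12 : (⟨1, by omega⟩ : Fin m) ≠ ⟨2, by omega⟩ := by simp [Fin.ext_iff]
  have hsplit := Finset.sum_inter_add_sum_sdiff X
    ({⟨0, by omega⟩, ⟨1, by omega⟩, ⟨2, by omega⟩} : Finset (Fin m)) v
  have h1 : ∑ x ∈ X ∩ ({⟨0, by omega⟩, ⟨1, by omega⟩, ⟨2, by omega⟩} : Finset (Fin m)), v x =
      (if (⟨0, by omega⟩ : Fin m) ∈ X then 1.2 else 0)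
      + (if (⟨1, by omega⟩ : Fin m) ∈ X then 1 else 0)
      + (if (⟨2, by omega⟩ : Fin m) ∈ X then 1 else 0) := by
    rw [Finset.inter_comm, ← Finset.filter_mem_eq_inter, Finset.sum_filter]
    rw [Finset.sum_insert (by simp [h01, h02]), Finset.sum_insert (by simp [h12]),
      Finset.sum_singleton, hv0, hv1, hv2]
    ring
  have h2 : ∑ x ∈ X \ ({⟨0, by omega⟩, ⟨1, by omega⟩, ⟨2, by omega⟩} : Finset (Fin m)), v x =
      (X \ {⟨0, by omega⟩, ⟨1, by omega⟩, ⟨2, by omega⟩}).card * ε := by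
    rw [Finset.sum_congr rfl (fun x hx => ?_), Finset.sum_const, nsmul_eq_mul]
    apply hvrest
    simp only [Finset.mem_sdiff, Finset.mem_insert, Finset.mem_singleton] at hx
    rcases x with ⟨k, hk⟩
    simp only [Fin.ext_iff, Fin.val_mk] at hx
    show 3 ≤ k
    omega
  linarith [hsplit, h1, h2]


/-- for two agents with identical additive valuations where
v(h₁) = 1.2, v(h₂) = v(h₃) = 1 and v(h_j) = ε for j ≥ 4 (with ε > 0 and (m−3)ε < 0.2),
the only EFX allocations are ({h₁, h₄, …, h_m}, {h₂, h₃}) and its swap.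
Goods are indexed by `Fin m`, with h₁ = 0, h₂ = 1, h₃ = 2 and h_j = j − 1 for j ≥ 4. -/
theorem efx_allocations_of_special_instance (m : ℕ) (hm : 4 ≤ m)
    (ε : ℝ) (hε : 0 < ε) (hεsmall : (m - 3 : ℕ) * ε < 0.2)
    (v : Fin m → ℝ)
    (hv0 : v ⟨0, by omega⟩ = 1.2)
    (hv1 : v ⟨1, by omega⟩ = 1)
    (hv2 : v ⟨2, by omega⟩ = 1)
    (hvrest : ∀ j : Fin m, 3 ≤ (j : ℕ) → v j = ε)
    (A : Finset (Fin m)) :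
    ((∀ g ∈ Aᶜ, 0 < v g → ∑ x ∈ Aᶜ.erase g, v x ≤ ∑ x ∈ A, v x) ∧
     (∀ g ∈ A, 0 < v g → ∑ x ∈ A.erase g, v x ≤ ∑ x ∈ Aᶜ, v x)) ↔
    (A = ({⟨1, by omega⟩, ⟨2, by omega⟩} : Finset (Fin m))ᶜ ∨
     A = ({⟨1, by omega⟩, ⟨2, by omega⟩} : Finset (Fin m))) := by
  classical
  have h01 : (⟨0, by omega⟩ : Fin m) ≠ ⟨1, by omega⟩ := by simp [Fin.ext_iff]
  have h02 : (⟨0, by omega⟩ : Fin m) ≠ ⟨2, by omega⟩ := by simp [Fin.ext_iff]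
  have h12 : (⟨1, by omega⟩ : Fin m) ≠ ⟨2, by omega⟩ := by simp [Fin.ext_iff]
  have hU := sum_decomp_aux m hm ε v hv0 hv1 hv2 hvrest Finset.univ
  have hUcard : (Finset.univ \
      ({⟨0, by omega⟩, ⟨1, by omega⟩, ⟨2, by omega⟩} : Finset (Fin m))).card = m - 3 := by
    rw [← Finset.compl_eq_univ_sdiff, Finset.card_compl]
    rw [Finset.card_insert_of_notMem (by simp [h01, h02]),
      Finset.card_insert_of_notMem (by simp [h12]), Finset.card_singleton]
    simp
  rw [hUcard] at hU
  simp only [Finset.mem_univ, if_true] at hU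
  have hScast : (0:ℝ) ≤ ((m-3:ℕ):ℝ) * ε := mul_nonneg (Nat.cast_nonneg _) hε.le
  constructor
  · rintro ⟨H1, H2⟩
    have htotA := Finset.sum_add_sum_compl A v
    have hA := sum_decomp_aux m hm ε v hv0 hv1 hv2 hvrest A
    have hB := sum_decomp_aux m hm ε v hv0 hv1 hv2 hvrest Aᶜ
    have hkA : (0:ℝ) ≤
        ((A \ ({⟨0, by omega⟩, ⟨1, by omega⟩, ⟨2, by omega⟩} : Finset (Fin m))).card : ℝ) * ε :=
      mul_nonneg (Nat.cast_nonneg _) hε.le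
    have hkB : (0:ℝ) ≤
        ((Aᶜ \ ({⟨0, by omega⟩, ⟨1, by omega⟩, ⟨2, by omega⟩} : Finset (Fin m))).card : ℝ) * ε :=
      mul_nonneg (Nat.cast_nonneg _) hε.le
    by_cases h0 : (⟨0, by omega⟩ : Fin m) ∈ A
    · by_cases h1 : (⟨1, by omega⟩ : Fin m) ∈ A
      · -- i0, i1 ∈ A : contradiction via g = i1
        exfalso
        have hc := H2 ⟨1, by omega⟩ h1 (by rw [hv1]; norm_num)
        have he := Finset.sum_erase_add A v h1
        rw [hv1] at he
        rw [if_pos h0, if_pos h1] at hA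
        rw [if_neg (by simp [Finset.mem_compl, h0]), if_neg (by simp [Finset.mem_compl, h1])] at hB
        by_cases h2 : (⟨2, by omega⟩ : Fin m) ∈ A
        · rw [if_pos h2] at hA
          rw [if_neg (by simp [Finset.mem_compl, h2])] at hB
          linarith
        · rw [if_neg h2] at hA
          rw [if_pos (Finset.mem_compl.mpr h2)] at hB
          linarith
      · by_cases h2 : (⟨2, by omega⟩ : Fin m) ∈ A
        · -- i0, i2 ∈ A, i1 ∉ A : contradiction via g = i2
          exfalso
          have hc := H2 ⟨2, by omega⟩ h2 (by rw [hv2]; norm_num)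
          have he := Finset.sum_erase_add A v h2
          rw [hv2] at he
          rw [if_pos h0, if_neg h1, if_pos h2] at hA
          rw [if_neg (by simp [Finset.mem_compl, h0]), if_pos (Finset.mem_compl.mpr h1),
            if_neg (by simp [Finset.mem_compl, h2])] at hB
          linarith
        · -- target case : A = {i1, i2}ᶜ
          left
          rw [if_pos h0, if_neg h1, if_neg h2] at hA
          rw [if_neg (by simp [Finset.mem_compl, h0]), if_pos (Finset.mem_compl.mpr h1),
            if_pos (Finset.mem_compl.mpr h2)] at hB
          have hsub : Aᶜ ⊆ ({⟨1, by omega⟩, ⟨2, by omega⟩} : Finset (Fin m)) := by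
            intro g hg
            simp only [Finset.mem_insert, Finset.mem_singleton]
            by_contra hgne
            push_neg at hgne
            have hg0 : g ≠ ⟨0, by omega⟩ := fun h => (Finset.mem_compl.mp hg) (h ▸ h0)
            have hg3 : 3 ≤ (g : ℕ) := by
              rcases g with ⟨k, hk⟩
              show 3 ≤ k
              by_contra hlt
              push_neg at hlt
              interval_cases k
              · exact hg0 (Fin.ext rfl)
              · exact hgne.1 (Fin.ext rfl)
              · exact hgne.2 (Fin.ext rfl)
            have hvg : v g = ε := hvrest g hg3
            have hgB : g ∈ Aᶜ \ ({⟨0, by omega⟩, ⟨1, by omega⟩, ⟨2, by omega⟩} : Finset (Fin m)) := by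
              rw [Finset.mem_sdiff]
              refine ⟨hg, ?_⟩
              simp only [Finset.mem_insert, Finset.mem_singleton]
              push_neg
              exact ⟨hg0, hgne.1, hgne.2⟩
            have hone : (1:ℝ) ≤
                ((Aᶜ \ ({⟨0, by omega⟩, ⟨1, by omega⟩, ⟨2, by omega⟩} : Finset (Fin m))).card : ℝ) := by
              exact_mod_cast Finset.card_pos.mpr ⟨g, hgB⟩
            have hεle : ε ≤
                ((Aᶜ \ ({⟨0, by omega⟩, ⟨1, by omega⟩, ⟨2, by omega⟩} : Finset (Fin m))).card : ℝ) * ε :=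
              le_mul_of_one_le_left hε.le hone
            have hc := H1 g hg (hvg ▸ hε)
            have he := Finset.sum_erase_add Aᶜ v hg
            rw [hvg] at he
            linarith
          have hsup : ({⟨1, by omega⟩, ⟨2, by omega⟩} : Finset (Fin m)) ⊆ Aᶜ := by
            intro g hg
            simp only [Finset.mem_insert, Finset.mem_singleton] at hg
            rcases hg with rfl | rfl
            · exact Finset.mem_compl.mpr h1
            · exact Finset.mem_compl.mpr h2
          have hAc : Aᶜ = ({⟨1, by omega⟩, ⟨2, by omega⟩} : Finset (Fin m)) :=
            Finset.Subset.antisymm hsub hsup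
          rw [← hAc, compl_compl]
    · by_cases h1 : (⟨1, by omega⟩ : Fin m) ∈ A
      · by_cases h2 : (⟨2, by omega⟩ : Fin m) ∈ A
        · -- target case : A = {i1, i2}
          right
          rw [if_neg h0, if_pos h1, if_pos h2] at hA
          rw [if_pos (Finset.mem_compl.mpr h0), if_neg (by simp [Finset.mem_compl, h1]),
            if_neg (by simp [Finset.mem_compl, h2])] at hB
          have hsub : A ⊆ ({⟨1, by omega⟩, ⟨2, by omega⟩} : Finset (Fin m)) := by
            intro g hg
            simp only [Finset.mem_insert, Finset.mem_singleton]
            by_contra hgne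
            push_neg at hgne
            have hg0 : g ≠ ⟨0, by omega⟩ := fun h => h0 (h ▸ hg)
            have hg3 : 3 ≤ (g : ℕ) := by
              rcases g with ⟨k, hk⟩
              show 3 ≤ k
              by_contra hlt
              push_neg at hlt
              interval_cases k
              · exact hg0 (Fin.ext rfl)
              · exact hgne.1 (Fin.ext rfl)
              · exact hgne.2 (Fin.ext rfl)
            have hvg : v g = ε := hvrest g hg3
            have hgA : g ∈ A \ ({⟨0, by omega⟩, ⟨1, by omega⟩, ⟨2, by omega⟩} : Finset (Fin m)) := by
              rw [Finset.mem_sdiff]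
              refine ⟨hg, ?_⟩
              simp only [Finset.mem_insert, Finset.mem_singleton]
              push_neg
              exact ⟨hg0, hgne.1, hgne.2⟩
            have hone : (1:ℝ) ≤
                ((A \ ({⟨0, by omega⟩, ⟨1, by omega⟩, ⟨2, by omega⟩} : Finset (Fin m))).card : ℝ) := by
              exact_mod_cast Finset.card_pos.mpr ⟨g, hgA⟩
            have hεle : ε ≤
                ((A \ ({⟨0, by omega⟩, ⟨1, by omega⟩, ⟨2, by omega⟩} : Finset (Fin m))).card : ℝ) * ε :=
              le_mul_of_one_le_left hε.le hone
            have hc := H2 g hg (hvg ▸ hε)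
            have he := Finset.sum_erase_add A v hg
            rw [hvg] at he
            linarith
          have hsup : ({⟨1, by omega⟩, ⟨2, by omega⟩} : Finset (Fin m)) ⊆ A := by
            intro g hg
            simp only [Finset.mem_insert, Finset.mem_singleton] at hg
            rcases hg with rfl | rfl
            · exact h1
            · exact h2
          exact Finset.Subset.antisymm hsub hsup
        · -- i1 ∈ A, i0, i2 ∉ A : contradiction via g = i2 ∈ Aᶜ
          exfalso
          have h2c : (⟨2, by omega⟩ : Fin m) ∈ Aᶜ := Finset.mem_compl.mpr h2
          have hc := H1 ⟨2, by omega⟩ h2c (by rw [hv2]; norm_num)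
          have he := Finset.sum_erase_add Aᶜ v h2c
          rw [hv2] at he
          rw [if_neg h0, if_pos h1, if_neg h2] at hA
          rw [if_pos (Finset.mem_compl.mpr h0), if_neg (by simp [Finset.mem_compl, h1]),
            if_pos h2c] at hB
          linarith
      · -- i0, i1 ∉ A : contradiction via g = i1 ∈ Aᶜ
        exfalso
        have h1c : (⟨1, by omega⟩ : Fin m) ∈ Aᶜ := Finset.mem_compl.mpr h1
        have hc := H1 ⟨1, by omega⟩ h1c (by rw [hv1]; norm_num)
        have he := Finset.sum_erase_add Aᶜ v h1c
        rw [hv1] at he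
        rw [if_neg h0, if_neg h1] at hA
        rw [if_pos (Finset.mem_compl.mpr h0), if_pos h1c] at hB
        by_cases h2 : (⟨2, by omega⟩ : Fin m) ∈ A
        · rw [if_pos h2] at hA
          rw [if_neg (by simp [Finset.mem_compl, h2])] at hB
          linarith
        · rw [if_neg h2] at hA
          rw [if_pos (Finset.mem_compl.mpr h2)] at hB
          linarith
  · have hs2 : ∑ x ∈ ({⟨1, by omega⟩, ⟨2, by omega⟩} : Finset (Fin m)), v x = 2 := by
      rw [Finset.sum_insert (by simp [h12]), Finset.sum_singleton, hv1, hv2]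
      norm_num
    have htot2 := Finset.sum_add_sum_compl
      ({⟨1, by omega⟩, ⟨2, by omega⟩} : Finset (Fin m)) v
    rintro (rfl | rfl)
    · simp only [compl_compl]
      constructor
      · intro g hg hvg
        have hg' : g = (⟨1, by omega⟩ : Fin m) ∨ g = ⟨2, by omega⟩ := by simpa using hg
        have hvg1 : v g = 1 := by rcases hg' with rfl | rfl
                                  exacts [hv1, hv2]
        have he := Finset.sum_erase_add ({⟨1, by omega⟩, ⟨2, by omega⟩} : Finset (Fin m)) v hg
        rw [hvg1] at he
        linarith
      · intro g hg hvg
        have he := Finset.sum_erase_add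
          (({⟨1, by omega⟩, ⟨2, by omega⟩} : Finset (Fin m))ᶜ) v hg
        linarith
    · constructor
      · intro g hg hvg
        have he := Finset.sum_erase_add
          (({⟨1, by omega⟩, ⟨2, by omega⟩} : Finset (Fin m))ᶜ) v hg
        linarith
      · intro g hg hvg
        have hg' : g = (⟨1, by omega⟩ : Fin m) ∨ g = ⟨2, by omega⟩ := by simpa using hg
        have hvg1 : v g = 1 := by rcases hg' with rfl | rfl
                                  exacts [hv1, hv2]
        have he := Finset.sum_erase_add ({⟨1, by omega⟩, ⟨2, by omega⟩} : Finset (Fin m)) v hg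
        rw [hvg1] at he
        linarith
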